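/- Let T > 0 and δ ∈ (0,T]. Let (Ω, 𝓕, P) be a probability space with a filtration (𝓕_s)_{s ∈ [0,T]}. Let f : [0,T] × [0,T] × ℝ × ℝ × Ω → ℝ be measurable, progressively measurable in (s,ω) for each fixed (t,y,z), and Lipschitz in (y,z) with constant c_f: |f(t,s,y,z,ω) − f(t,s,y',z',ω)| ≤ c_f(|y − y'| + |z − z'|). Let L be adapted with continuous paths and E[sup_v |L(v)|] < ∞, and let ξ(t) (t ∈ [0,T]) be integrable 𝓕_T-measurable random variables. Let U, U' : [0,T] × Ω → ℝ be progressively measurable and V, V' : [0,T]² × Ω → ℝ be jointly measurable with V(t,·), V'(t,·) progressively measurable for each t, such that all the reward variables below are integrable and E[∫_{T−δ}^T |U − U'|² ds] + E[∫_{T−δ}^T ∫ₜᵀ |V(t,s) − V'(t,s)|² ds dt] < ∞. For each t ∈ [T−δ, T], let Y(t) be an essential supremum of { E[ ∫ₜ^τ f(t,s,U(s),V(t,s)) ds + L(τ) 1_{τ<T} + ξ(t) 1_{τ=T} | 𝓕_t ] : τ ∈ S_t } and let Y'(t) be an essential supremum of the analogous family with (U', V') in place of (U, V); assume (t,ω)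 ↦ Y(t,ω) and (t,ω) ↦ Y'(t,ω) are jointly measurable. Then E[ ∫_{T−δ}^T |Y(t) − Y'(t)|² dt ] ≤ 4 c_f² (δ² + δ) ( E[∫_{T−δ}^T |U(s) − U'(s)|² ds] + E[∫_{T−δ}^T ∫ₜᵀ |V(t,s) − V'(t,s)|² ds dt] ). -/

import Mathlib

open MeasureTheory Set
open scoped ENNReal

/-- The stopped reward `∫ᵤ^τ f(s) ds + L(τ) 1_{τ<T} + ξ 1_{τ=T}`. -/
noncomputable def reward {Ω : Type*} (f : ℝ → Ω → ℝ) (L : ℝ → Ω → ℝ) (ξ : Ω → ℝ)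
    (u T : ℝ) (τ : Ω → ℝ) (ω : Ω) : ℝ :=
  (∫ s in u..(τ ω), f s ω) + (if τ ω < T then L (τ ω) ω else 0) +
    (if τ ω = T then ξ ω else 0)

/-- `Y` is an essential supremum of the family `X i`, `i : ι`, of integrable random
variables: `Y` is integrable, dominates every `X i` a.s., and is a.s. below every
random variable dominating the whole family a.s. -/
def IsEssSupFamily {Ω : Type*} {m0 : MeasurableSpace Ω} (P : Measure Ω)
    {ι : Sort*} (X : ι → Ω → ℝ) (Y : Ω → ℝ) : Prop :=
  Integrable Y P ∧ (∀ i, ∀ᵐ ω ∂P, X i ω ≤ Y ω) ∧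
    ∀ Z : Ω → ℝ, AEStronglyMeasurable Z P →
      (∀ i, ∀ᵐ ω ∂P, X i ω ≤ Z ω) → ∀ᵐ ω ∂P, Y ω ≤ Z ω

/-- The set `S_u` of stopping times of the filtration `ℱ` with values in `[u,T]` a.s. -/
def StoppingTimesIn {Ω : Type*} {m0 : MeasurableSpace Ω} (ℱ : Filtration ℝ m0)
    (P : Measure Ω) (u T : ℝ) : Set (Ω → ℝ) :=
  {τ | IsStoppingTime ℱ (fun ω => (τ ω : WithTop ℝ)) ∧ ∀ᵐ ω ∂P, τ ω ∈ Icc u T}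

section Helpers

variable {α : Type*} {m m0 : MeasurableSpace α} {μ : Measure α}

lemma lintegral_ofReal_sq_eq (h : α → ℝ) :
    ∫⁻ a, ENNReal.ofReal (h a ^ 2) ∂μ = eLpNorm h 2 μ ^ 2 := by
  rw [eLpNorm_eq_lintegral_rpow_enorm_toReal two_ne_zero ENNReal.ofNat_ne_top]
  rw [← ENNReal.rpow_natCast _ 2, ← ENNReal.rpow_mul]
  norm_num
  congr 1
  ext a
  rw [← sq_abs (h a), ENNReal.ofReal_pow (abs_nonneg _), ← Real.enorm_eq_ofReal_abs]

lemma eLpNorm_two_condexp_le (hm : m ≤ m0) [IsFiniteMeasure μ] {X : α → ℝ}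
    (hX : MemLp X 2 μ) : eLpNorm (μ[X|m]) 2 μ ≤ eLpNorm X 2 μ := by
  have hXi : Integrable X μ := hX.integrable one_le_two
  set F : Lp ℝ 2 μ := hX.toLp X with hF
  have hFae : (F : α → ℝ) =ᵐ[μ] X := hX.coeFn_toLp
  have key : (condExpL2 ℝ ℝ hm F : α → ℝ) =ᵐ[μ] μ[X|m] := by
    refine ae_eq_condExp_of_forall_setIntegral_eq hm hXi ?_ ?_ ?_
    · intro s _ _
      exact (integrable_condExpL2_of_isFiniteMeasure hm).integrableOn
    · intro s hs hμs
      rw [integral_condExpL2_eq hm F hs hμs.ne]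
      exact setIntegral_congr_ae (hm s hs) (hFae.mono fun x hx _ => hx)
    · exact aestronglyMeasurable_condExpL2 hm F
  calc eLpNorm (μ[X|m]) 2 μ = eLpNorm (condExpL2 ℝ ℝ hm F : α → ℝ) 2 μ :=
        (eLpNorm_congr_ae key).symm
    _ ≤ eLpNorm (F : α → ℝ) 2 μ := eLpNorm_condExpL2_le hm F
    _ = eLpNorm X 2 μ := eLpNorm_congr_ae hFae

lemma progMeasurable_extend {Ω : Type*} {m0 : MeasurableSpace Ω} {ℱ : Filtration ℝ m0}
    {U : ℝ → Ω → ℝ} (hU : ProgMeasurable ℱ U) (T : ℝ) :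
    Measurable fun p : ℝ × Ω => if p.1 ≤ T then U p.1 p.2 else 0 := by
  have h1 : Measurable fun p : Set.Iic T × Ω => U p.1 p.2 := by
    refine (hU T).measurable.mono ?_ le_rfl
    exact sup_le_sup (MeasurableSpace.comap_mono le_rfl) (MeasurableSpace.comap_mono (ℱ.le T))
  set e : Set.Iic T × Ω → ℝ × Ω := fun q => (q.1.1, q.2) with he
  have hemb : MeasurableEmbedding e := by
    exact (MeasurableEmbedding.subtype_coe (measurableSet_Iic)).prodMap
      MeasurableEmbedding.id
  have := hemb.measurable_extend h1 (measurable_const (a := (0:ℝ)))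
  convert this using 1
  funext p
  by_cases hp : p.1 ≤ T
  · have : p = e ⟨⟨p.1, hp⟩, p.2⟩ := rfl
    rw [this, hemb.injective.extend_apply]
    simp [hp, he]
  · rw [Function.extend_apply' _ _ _ (by
      rintro ⟨q, rfl⟩
      exact hp q.1.2)]
    simp [hp]

end Helpers

lemma key_step {Ω : Type*} {m0 : MeasurableSpace Ω} (P : Measure Ω) [IsProbabilityMeasure P]
    (ℱ : Filtration ℝ m0) (T δ t : ℝ) (hδ : 0 < δ) (ht : t ∈ Icc (T - δ) T)
    (φ φ' g g' : ℝ → Ω → ℝ)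
    (hg : Measurable fun p : ℝ × Ω => g p.1 p.2)
    (hg' : Measurable fun p : ℝ × Ω => g' p.1 p.2)
    (hφg : ∀ s ω, s ≤ T → φ s ω = g s ω)
    (hφ'g' : ∀ s ω, s ≤ T → φ' s ω = g' s ω)
    (ψ : ℝ → Ω → ℝ) (hψ : Measurable fun p : ℝ × Ω => ψ p.1 p.2)
    (hψnn : ∀ s ω, 0 ≤ ψ s ω)
    (hgl : ∀ s ω, |g s ω - g' s ω| ≤ ψ s ω)
    (L : ℝ → Ω → ℝ) (ξt : Ω → ℝ)
    (hreward_int : ∀ τ ∈ StoppingTimesIn ℱ P t T,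
      Integrable (reward φ L ξt t T τ) P ∧ Integrable (reward φ' L ξt t T τ) P)
    (Yt Y't : Ω → ℝ)
    (hYtm : AEStronglyMeasurable Yt P) (hY'tm : AEStronglyMeasurable Y't P)
    (hYt : IsEssSupFamily P
      (fun τ : StoppingTimesIn ℱ P t T => P[reward φ L ξt t T ↑τ|ℱ t]) Yt)
    (hY't : IsEssSupFamily P
      (fun τ : StoppingTimesIn ℱ P t T => P[reward φ' L ξt t T ↑τ|ℱ t]) Y't) :
    ∫⁻ ω, ENNReal.ofReal ((Yt ω - Y't ω) ^ 2) ∂P ≤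
      ENNReal.ofReal δ * ∫⁻ ω, (∫⁻ s in Icc t T, ENNReal.ofReal (ψ s ω ^ 2)) ∂P := by
  classical
  set Sψ : ℝ≥0∞ := ∫⁻ ω, (∫⁻ s in Icc t T, ENNReal.ofReal (ψ s ω ^ 2)) ∂P with hSψ
  by_cases hfin : Sψ < ⊤
  swap
  · rw [not_lt, top_le_iff] at hfin
    rw [hfin, ENNReal.mul_top (by simp [hδ])]
    exact le_top
  -- measurability of the inner square integral
  have mψ2 : Measurable fun p : ℝ × Ω => ENNReal.ofReal (ψ p.1 p.2 ^ 2) :=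
    ((hψ.pow_const 2).ennreal_ofReal)
  have mG : Measurable fun ω => ∫⁻ s in Icc t T, ENNReal.ofReal (ψ s ω ^ 2) :=
    Measurable.lintegral_prod_right' (f := fun q : Ω × ℝ => ENNReal.ofReal (ψ q.2 q.1 ^ 2))
      (mψ2.comp measurable_swap)
  have hGae : ∀ᵐ ω ∂P, (∫⁻ s in Icc t T, ENNReal.ofReal (ψ s ω ^ 2)) < ⊤ :=
    ae_lt_top mG hfin.ne
  -- Cauchy-Schwarz per ω
  have hconj : (2 : ℝ).HolderConjugate 2 := Real.holderConjugate_iff.mpr ⟨one_lt_two, by norm_num⟩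
  have hCS : ∀ ω, (∫⁻ s in Icc t T, ENNReal.ofReal (ψ s ω)) ≤
      ((∫⁻ s in Icc t T, ENNReal.ofReal (ψ s ω ^ 2)) ^ (1/2 : ℝ)) *
        (ENNReal.ofReal (T - t)) ^ (1/2 : ℝ) := by
    intro ω
    have hmf : AEMeasurable (fun s => ENNReal.ofReal (ψ s ω)) (volume.restrict (Icc t T)) :=
      ((hψ.comp measurable_prodMk_right).ennreal_ofReal).aemeasurable
    have h := ENNReal.lintegral_mul_le_Lp_mul_Lq (volume.restrict (Icc t T)) hconj hmf
      (aemeasurable_const (b := (1:ℝ≥0∞)))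
    simp only [Pi.mul_apply, mul_one] at h
    have h2 : (∫⁻ s in Icc t T, (ENNReal.ofReal (ψ s ω)) ^ (2:ℝ)) =
        ∫⁻ s in Icc t T, ENNReal.ofReal (ψ s ω ^ 2) := by
      congr 1; funext s
      rw [show (2:ℝ) = ((2:ℕ):ℝ) by norm_num, ENNReal.rpow_natCast,
        ← ENNReal.ofReal_pow (hψnn s ω)]
    have h3 : (∫⁻ (_ : ℝ) in Icc t T, ((1:ℝ≥0∞) ^ (2:ℝ))) = ENNReal.ofReal (T - t) := by
      simp [Real.volume_Icc]
    rw [h2, h3] at h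
    exact h
  set X : Ω → ℝ := fun ω => ∫ s in Icc t T, ψ s ω with hXdef
  have hXnn : ∀ ω, 0 ≤ X ω := fun ω => setIntegral_nonneg measurableSet_Icc fun s _ => hψnn s ω
  have hXle : ∀ ω, ENNReal.ofReal (X ω) ≤ ∫⁻ s in Icc t T, ENNReal.ofReal (ψ s ω) := by
    intro ω
    by_cases hi : IntegrableOn (fun s => ψ s ω) (Icc t T) volume
    · rw [hXdef]
      simp only
      rw [ofReal_integral_eq_lintegral_ofReal hi (ae_of_all _ fun s => hψnn s ω)]
    · rw [hXdef]
      simp only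
      rw [integral_undef hi]
      simp
  have hTt : T - t ≤ δ := by have := ht.1; linarith
  have hXsq : ∀ ω, ENNReal.ofReal (X ω ^ 2) ≤
      ENNReal.ofReal (T - t) * ∫⁻ s in Icc t T, ENNReal.ofReal (ψ s ω ^ 2) := by
    intro ω
    have h1 : ENNReal.ofReal (X ω ^ 2) = (ENNReal.ofReal (X ω)) ^ 2 :=
      ENNReal.ofReal_pow (hXnn ω) 2
    rw [h1]
    calc (ENNReal.ofReal (X ω)) ^ 2
        ≤ (((∫⁻ s in Icc t T, ENNReal.ofReal (ψ s ω ^ 2)) ^ (1/2:ℝ)) *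
            (ENNReal.ofReal (T - t)) ^ (1/2:ℝ)) ^ 2 :=
          pow_le_pow_left₀ zero_le ((hXle ω).trans (hCS ω)) 2
      _ = ENNReal.ofReal (T - t) * ∫⁻ s in Icc t T, ENNReal.ofReal (ψ s ω ^ 2) := by
          rw [mul_pow, ← ENNReal.rpow_natCast (_ ^ (1/2:ℝ)) 2,
            ← ENNReal.rpow_natCast ((ENNReal.ofReal (T - t)) ^ (1/2:ℝ)) 2,
            ← ENNReal.rpow_mul, ← ENNReal.rpow_mul]
          norm_num [mul_comm]
  have hXsqint : (∫⁻ ω, ENNReal.ofReal (X ω ^ 2) ∂P) < ⊤ := by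
    refine lt_of_le_of_lt (lintegral_mono fun ω => hXsq ω) ?_
    rw [lintegral_const_mul' _ _ ENNReal.ofReal_ne_top]
    exact ENNReal.mul_lt_top ENNReal.ofReal_lt_top hfin
  have hXm : AEStronglyMeasurable X P := by
    have h1 : StronglyMeasurable fun q : Ω × ℝ => ψ q.2 q.1 :=
      (hψ.comp measurable_swap).stronglyMeasurable
    exact (h1.integral_prod_right').aestronglyMeasurable
  have hXmem : MemLp X 2 P := by
    refine ⟨hXm, ?_⟩
    have h2 := lintegral_ofReal_sq_eq (μ := P) X
    rw [h2] at hXsqint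
    by_contra h
    rw [not_lt, top_le_iff] at h
    rw [h] at hXsqint
    exact (lt_irrefl _ hXsqint).elim
  have hXint : Integrable X P := hXmem.integrable one_le_two
  have hψm1 : ∀ ω, Measurable fun s => ψ s ω := fun ω => hψ.comp measurable_prodMk_right
  have hψaint : ∀ᵐ ω ∂P, IntegrableOn (fun s => ψ s ω) (Icc t T) volume := by
    filter_upwards [hGae] with ω hG
    refine ⟨(hψm1 ω).aestronglyMeasurable, ?_⟩
    have hn : (∫⁻ s in Icc t T, (‖ψ s ω‖₊ : ℝ≥0∞)) = ∫⁻ s in Icc t T, ENNReal.ofReal (ψ s ω) := by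
      congr 1; funext s; exact Real.enorm_eq_ofReal (hψnn s ω)
    show (∫⁻ s in Icc t T, (‖ψ s ω‖₊ : ℝ≥0∞)) < ⊤
    rw [hn]
    refine lt_of_le_of_lt (hCS ω) ?_
    exact ENNReal.mul_lt_top (ENNReal.rpow_lt_top_of_nonneg (by norm_num) hG.ne)
      (ENNReal.rpow_lt_top_of_nonneg (by norm_num) ENNReal.ofReal_ne_top)
  -- Claim A: pathwise bound on the reward difference
  have claimA : ∀ τ, τ ∈ StoppingTimesIn ℱ P t T → ∀ᵐ ω ∂P,
      |reward φ L ξt t T τ ω - reward φ' L ξt t T τ ω| ≤ X ω := by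
    intro τ hτ
    filter_upwards [hτ.2, hψaint] with ω hτω hψω
    set a := τ ω with ha
    have hta : t ≤ a := hτω.1
    have haT : a ≤ T := hτω.2
    have hred : reward φ L ξt t T τ ω - reward φ' L ξt t T τ ω =
        (∫ s in t..a, φ s ω) - ∫ s in t..a, φ' s ω := by
      simp only [reward, ← ha]
      ring
    have huIcc : uIcc t a = Icc t a := uIcc_of_le hta
    have e1 : (∫ s in t..a, φ s ω) = ∫ s in t..a, g s ω := by
      refine intervalIntegral.integral_congr fun s hs => ?_
      rw [huIcc] at hs
      exact hφg s ω (hs.2.trans haT)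
    have e1' : (∫ s in t..a, φ' s ω) = ∫ s in t..a, g' s ω := by
      refine intervalIntegral.integral_congr fun s hs => ?_
      rw [huIcc] at hs
      exact hφ'g' s ω (hs.2.trans haT)
    set d : ℝ → ℝ := fun s => g s ω - g' s ω with hd
    have hdm : Measurable d :=
      (hg.comp measurable_prodMk_right).sub (hg'.comp measurable_prodMk_right)
    have hdint : IntegrableOn d (Icc t T) volume := by
      refine Integrable.mono hψω hdm.aestronglyMeasurable (ae_of_all _ fun s => ?_)
      rw [Real.norm_eq_abs, Real.norm_eq_abs, abs_of_nonneg (hψnn s ω)]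
      exact hgl s ω
    have hdII : IntervalIntegrable d volume t a := by
      rw [intervalIntegrable_iff_integrableOn_Icc_of_le hta]
      exact hdint.mono_set (Icc_subset_Icc le_rfl haT)
    have hψII : IntervalIntegrable (fun s => ψ s ω) volume t a := by
      rw [intervalIntegrable_iff_integrableOn_Icc_of_le hta]
      exact hψω.mono_set (Icc_subset_Icc le_rfl haT)
    have hXb : (∫ s in t..a, ψ s ω) ≤ X ω := by
      rw [intervalIntegral.integral_of_le hta]
      exact setIntegral_mono_set hψω (ae_of_all _ fun s => hψnn s ω)
        ((Ioc_subset_Icc_self.trans (Icc_subset_Icc le_rfl haT)).eventuallyLE)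
    rw [hred, e1, e1']
    by_cases hgi : IntervalIntegrable (fun s => g s ω) volume t a
    · have hg'i : IntervalIntegrable (fun s => g' s ω) volume t a := by
        have heq : (fun s => g' s ω) = fun s => g s ω - d s := by
          funext s; rw [hd]; ring
        rw [heq]
        exact hgi.sub hdII
      have e2 : (∫ s in t..a, g s ω) - ∫ s in t..a, g' s ω = ∫ s in t..a, d s :=
        (intervalIntegral.integral_sub hgi hg'i).symm
      rw [e2]
      have e3 : |∫ s in t..a, d s| ≤ ∫ s in t..a, |d s| := by
        have := intervalIntegral.norm_integral_le_integral_norm (f := d) (μ := volume) hta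
        simpa [Real.norm_eq_abs] using this
      refine (e3.trans ?_).trans hXb
      refine intervalIntegral.integral_mono_on hta hdII.abs hψII fun s _ => hgl s ω
    · have hg'i : ¬ IntervalIntegrable (fun s => g' s ω) volume t a := by
        intro hcon
        refine hgi ?_
        have heq : (fun s => g s ω) = fun s => g' s ω + d s := by
          funext s; rw [hd]; ring
        rw [heq]
        exact hcon.add hdII
      rw [intervalIntegral.integral_undef hgi, intervalIntegral.integral_undef hg'i]
      simpa using hXnn ω
  -- conditional expectation comparison
  have hgm : AEStronglyMeasurable (P[X|ℱ t]) P :=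
    (stronglyMeasurable_condExp.mono (ℱ.le t)).aestronglyMeasurable
  have dir1 : ∀ᵐ ω ∂P, Yt ω ≤ Y't ω + (P[X|ℱ t]) ω := by
    refine hYt.2.2 _ (hY'tm.add hgm) fun τ => ?_
    have hri := hreward_int ↑τ τ.2
    have h1 : reward φ L ξt t T ↑τ ≤ᵐ[P] reward φ' L ξt t T ↑τ + X := by
      filter_upwards [claimA ↑τ τ.2] with ω h
      have h2 := (abs_le.1 h).2
      simp only [Pi.add_apply]
      linarith
    have h2 := condExp_mono (μ := P) (m := ℱ t) hri.1 (hri.2.add hXint) h1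
    have h3 := condExp_add (μ := P) (m := ℱ t) hri.2 hXint
    filter_upwards [h2, h3, hY't.2.1 τ] with ω ha hb hc
    simp only [Pi.add_apply] at ha hb ⊢
    rw [hb] at ha
    linarith
  have dir2 : ∀ᵐ ω ∂P, Y't ω ≤ Yt ω + (P[X|ℱ t]) ω := by
    refine hY't.2.2 _ (hYtm.add hgm) fun τ => ?_
    have hri := hreward_int ↑τ τ.2
    have h1 : reward φ' L ξt t T ↑τ ≤ᵐ[P] reward φ L ξt t T ↑τ + X := by
      filter_upwards [claimA ↑τ τ.2] with ω h
      have h2 := (abs_le.1 h).1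
      simp only [Pi.add_apply]
      linarith
    have h2 := condExp_mono (μ := P) (m := ℱ t) hri.2 (hri.1.add hXint) h1
    have h3 := condExp_add (μ := P) (m := ℱ t) hri.1 hXint
    filter_upwards [h2, h3, hYt.2.1 τ] with ω ha hb hc
    simp only [Pi.add_apply] at ha hb ⊢
    rw [hb] at ha
    linarith
  have hgnn : 0 ≤ᵐ[P] P[X|ℱ t] := condExp_nonneg (ae_of_all _ hXnn)
  -- final chain
  calc ∫⁻ ω, ENNReal.ofReal ((Yt ω - Y't ω) ^ 2) ∂P
      ≤ ∫⁻ ω, ENNReal.ofReal ((P[X|ℱ t]) ω ^ 2) ∂P := by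
        refine lintegral_mono_ae ?_
        filter_upwards [dir1, dir2, hgnn] with ω h1 h2 h3
        exact ENNReal.ofReal_le_ofReal (sq_le_sq' (by linarith) (by linarith))
    _ = eLpNorm (P[X|ℱ t]) 2 P ^ 2 := lintegral_ofReal_sq_eq _
    _ ≤ eLpNorm X 2 P ^ 2 :=
        pow_le_pow_left₀ zero_le (eLpNorm_two_condexp_le (ℱ.le t) hXmem) 2
    _ = ∫⁻ ω, ENNReal.ofReal (X ω ^ 2) ∂P := (lintegral_ofReal_sq_eq _).symm
    _ ≤ ∫⁻ ω, (ENNReal.ofReal (T - t) * ∫⁻ s in Icc t T, ENNReal.ofReal (ψ s ω ^ 2)) ∂P :=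
        lintegral_mono fun ω => hXsq ω
    _ = ENNReal.ofReal (T - t) * Sψ := lintegral_const_mul' _ _ ENNReal.ofReal_ne_top
    _ ≤ ENNReal.ofReal δ * Sψ :=
        mul_le_mul_left (ENNReal.ofReal_le_ofReal hTt) _


/-- Contraction estimate for the `Y`-component of the fixed-point
map on `[T-δ, T]`:
`E[∫_{T-δ}^T |Y(t) - Y'(t)|² dt] ≤ 4 c_f² (δ² + δ)
  (E[∫_{T-δ}^T |U - U'|² ds] + E[∫_{T-δ}^T ∫ₜᵀ |V(t,s) - V'(t,s)|² ds dt])`. -/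
theorem value_process_contraction_estimate
    {Ω : Type*} {m0 : MeasurableSpace Ω} (P : Measure Ω) [IsProbabilityMeasure P]
    (ℱ : Filtration ℝ m0) (T δ c_f : ℝ) (hT : 0 < T) (hδ : 0 < δ) (hδT : δ ≤ T)
    (f : ℝ → ℝ → ℝ → ℝ → Ω → ℝ)
    (hf_meas : Measurable fun p : ℝ × ℝ × ℝ × ℝ × Ω =>
      f p.1 p.2.1 p.2.2.1 p.2.2.2.1 p.2.2.2.2)
    (hf_prog : ∀ t y z, ProgMeasurable ℱ (fun s ω => f t s y z ω))
    (hLip : ∀ (t s y y' z z' : ℝ) (ω : Ω),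
      |f t s y z ω - f t s y' z' ω| ≤ c_f * (|y - y'| + |z - z'|))
    (L : ℝ → Ω → ℝ) (hL : StronglyAdapted ℱ L)
    (hLc : ∀ ω, ContinuousOn (fun v => L v ω) (Icc 0 T))
    (hLint : ∫⁻ ω, (⨆ v ∈ Icc (0 : ℝ) T, ENNReal.ofReal |L v ω|) ∂P < ⊤)
    (ξ : ℝ → Ω → ℝ) (hξ : ∀ t, Integrable (ξ t) P) (hξm : ∀ t, Measurable[ℱ T] (ξ t))
    (U U' : ℝ → Ω → ℝ) (hU : ProgMeasurable ℱ U) (hU' : ProgMeasurable ℱ U')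
    (V V' : ℝ → ℝ → Ω → ℝ)
    (hV : Measurable fun p : ℝ × ℝ × Ω => V p.1 p.2.1 p.2.2)
    (hV' : Measurable fun p : ℝ × ℝ × Ω => V' p.1 p.2.1 p.2.2)
    (hVprog : ∀ t, ProgMeasurable ℱ (V t)) (hV'prog : ∀ t, ProgMeasurable ℱ (V' t))
    (hreward_int : ∀ t ∈ Icc (T - δ) T, ∀ τ ∈ StoppingTimesIn ℱ P t T,
      Integrable (reward (fun s ω => f t s (U s ω) (V t s ω) ω) L (ξ t) t T τ) P ∧
      Integrable (reward (fun s ω => f t s (U' s ω) (V' t s ω) ω) L (ξ t) t T τ) P)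
    (hdiff_fin : (∫⁻ ω, (∫⁻ s in Icc (T - δ) T,
          ENNReal.ofReal ((U s ω - U' s ω) ^ 2)) ∂P) +
        (∫⁻ ω, (∫⁻ t in Icc (T - δ) T,
          ∫⁻ s in Icc t T, ENNReal.ofReal ((V t s ω - V' t s ω) ^ 2)) ∂P) < ⊤)
    (Y Y' : ℝ → Ω → ℝ)
    (hYmeas : Measurable fun p : ℝ × Ω => Y p.1 p.2)
    (hY'meas : Measurable fun p : ℝ × Ω => Y' p.1 p.2)
    (hY : ∀ t ∈ Icc (T - δ) T, IsEssSupFamily P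
      (fun τ : StoppingTimesIn ℱ P t T =>
        P[reward (fun s ω => f t s (U s ω) (V t s ω) ω) L (ξ t) t T ↑τ | ℱ t])
      (Y t))
    (hY' : ∀ t ∈ Icc (T - δ) T, IsEssSupFamily P
      (fun τ : StoppingTimesIn ℱ P t T =>
        P[reward (fun s ω => f t s (U' s ω) (V' t s ω) ω) L (ξ t) t T ↑τ | ℱ t])
      (Y' t)) :
    ∫⁻ ω, (∫⁻ t in Icc (T - δ) T, ENNReal.ofReal ((Y t ω - Y' t ω) ^ 2)) ∂P ≤
      ENNReal.ofReal (4 * c_f ^ 2 * (δ ^ 2 + δ)) *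
        ((∫⁻ ω, (∫⁻ s in Icc (T - δ) T,
            ENNReal.ofReal ((U s ω - U' s ω) ^ 2)) ∂P) +
         (∫⁻ ω, (∫⁻ t in Icc (T - δ) T,
            ∫⁻ s in Icc t T, ENNReal.ofReal ((V t s ω - V' t s ω) ^ 2)) ∂P)) := by
  classical
  have hΩ : Nonempty Ω := by
    by_contra h
    rw [not_nonempty_iff] at h
    have h1 : P univ = 1 := measure_univ
    rw [Set.univ_eq_empty_iff.2 h, measure_empty] at h1
    exact zero_ne_one h1
  have hc : 0 ≤ c_f := by
    obtain ⟨ω⟩ := hΩ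
    have h := hLip 0 0 0 1 0 0 ω
    have h0 := abs_nonneg (f 0 0 0 0 ω - f 0 0 1 0 ω)
    simp at h
    linarith
  set UU : ℝ × Ω → ℝ := fun p => if p.1 ≤ T then U p.1 p.2 else 0 with hUUdef
  set UU' : ℝ × Ω → ℝ := fun p => if p.1 ≤ T then U' p.1 p.2 else 0 with hUU'def
  have mUU : Measurable UU := progMeasurable_extend hU T
  have mUU' : Measurable UU' := progMeasurable_extend hU' T
  -- quantities
  set A : ℝ≥0∞ :=
    ∫⁻ ω, (∫⁻ s in Icc (T - δ) T, ENNReal.ofReal ((UU (s, ω) - UU' (s, ω)) ^ 2)) ∂P with hA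
  have hAeq : A = ∫⁻ ω, (∫⁻ s in Icc (T - δ) T,
      ENNReal.ofReal ((U s ω - U' s ω) ^ 2)) ∂P := by
    refine lintegral_congr fun ω => ?_
    refine setLIntegral_congr_fun measurableSet_Icc (fun s hs => ?_)
    rw [hUUdef, hUU'def]
    simp [hs.2]
  set B : ℝ≥0∞ := ∫⁻ ω, (∫⁻ t in Icc (T - δ) T,
      ∫⁻ s in Icc t T, ENNReal.ofReal ((V t s ω - V' t s ω) ^ 2)) ∂P with hB
  -- per-t estimate
  have key2 : ∀ t ∈ Icc (T - δ) T,
      (∫⁻ ω, ENNReal.ofReal ((Y t ω - Y' t ω) ^ 2) ∂P) ≤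
        (ENNReal.ofReal δ * ENNReal.ofReal (2 * c_f ^ 2)) *
          ((∫⁻ ω, (∫⁻ s in Icc t T, ENNReal.ofReal ((UU (s, ω) - UU' (s, ω)) ^ 2)) ∂P) +
           (∫⁻ ω, (∫⁻ s in Icc t T, ENNReal.ofReal ((V t s ω - V' t s ω) ^ 2)) ∂P)) := by
    intro t ht
    set ψ : ℝ → Ω → ℝ :=
      fun s ω => c_f * (|UU (s, ω) - UU' (s, ω)| + |V t s ω - V' t s ω|) with hψdef
    have hVt : Measurable fun p : ℝ × Ω => V t p.1 p.2 :=
      hV.comp (measurable_const.prodMk (measurable_fst.prodMk measurable_snd))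
    have hV't : Measurable fun p : ℝ × Ω => V' t p.1 p.2 :=
      hV'.comp (measurable_const.prodMk (measurable_fst.prodMk measurable_snd))
    have hψm : Measurable fun p : ℝ × Ω => ψ p.1 p.2 := by
      exact (measurable_const.mul (((mUU.sub mUU').abs).add ((hVt.sub hV't).abs)))
    have hψnn : ∀ s ω, 0 ≤ ψ s ω := fun s ω => by positivity
    have hgm : Measurable fun p : ℝ × Ω =>
        f t p.1 (UU p) (V t p.1 p.2) p.2 := by
      exact hf_meas.comp (measurable_const.prodMk (measurable_fst.prodMk
        (mUU.prodMk ((hVt).prodMk measurable_snd))))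
    have hg'm : Measurable fun p : ℝ × Ω =>
        f t p.1 (UU' p) (V' t p.1 p.2) p.2 := by
      exact hf_meas.comp (measurable_const.prodMk (measurable_fst.prodMk
        (mUU'.prodMk ((hV't).prodMk measurable_snd))))
    have hkey := key_step P ℱ T δ t hδ ht
      (fun s ω => f t s (U s ω) (V t s ω) ω)
      (fun s ω => f t s (U' s ω) (V' t s ω) ω)
      (fun s ω => f t s (UU (s, ω)) (V t s ω) ω)
      (fun s ω => f t s (UU' (s, ω)) (V' t s ω) ω)
      hgm hg'm
      (by intro s ω hsT; rw [hUUdef]; simp [hsT])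
      (by intro s ω hsT; rw [hUU'def]; simp [hsT])
      ψ hψm hψnn
      (by
        intro s ω
        exact hLip t s (UU (s, ω)) (UU' (s, ω)) (V t s ω) (V' t s ω) ω)
      L (ξ t) (hreward_int t ht)
      (Y t) (Y' t)
      ((hYmeas.comp measurable_prodMk_left).aestronglyMeasurable)
      ((hY'meas.comp measurable_prodMk_left).aestronglyMeasurable)
      (hY t ht) (hY' t ht)
    refine hkey.trans ?_
    rw [mul_assoc]
    refine mul_le_mul_right ?_ _
    -- bound the ψ² integral
    have hpt : ∀ s ω, ENNReal.ofReal (ψ s ω ^ 2) ≤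
        ENNReal.ofReal (2 * c_f ^ 2) *
          (ENNReal.ofReal ((UU (s, ω) - UU' (s, ω)) ^ 2) +
           ENNReal.ofReal ((V t s ω - V' t s ω) ^ 2)) := by
      intro s ω
      rw [← ENNReal.ofReal_add (sq_nonneg _) (sq_nonneg _),
        ← ENNReal.ofReal_mul (by positivity)]
      refine ENNReal.ofReal_le_ofReal ?_
      rw [hψdef]
      simp only
      have h1 := sq_nonneg (|UU (s, ω) - UU' (s, ω)| - |V t s ω - V' t s ω|)
      have h2 := sq_abs (UU (s, ω) - UU' (s, ω))
      have h3 := sq_abs (V t s ω - V' t s ω)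
      nlinarith [sq_nonneg c_f, abs_nonneg (UU (s, ω) - UU' (s, ω)),
        abs_nonneg (V t s ω - V' t s ω)]
    have mF : Measurable fun p : ℝ × Ω => ENNReal.ofReal ((UU p - UU' p) ^ 2) :=
      ((mUU.sub mUU').pow_const 2).ennreal_ofReal
    have mG2 : Measurable fun p : ℝ × Ω => ENNReal.ofReal ((V t p.1 p.2 - V' t p.1 p.2) ^ 2) :=
      ((hVt.sub hV't).pow_const 2).ennreal_ofReal
    calc (∫⁻ ω, (∫⁻ s in Icc t T, ENNReal.ofReal (ψ s ω ^ 2)) ∂P)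
        ≤ ∫⁻ ω, (∫⁻ s in Icc t T, ENNReal.ofReal (2 * c_f ^ 2) *
            (ENNReal.ofReal ((UU (s, ω) - UU' (s, ω)) ^ 2) +
             ENNReal.ofReal ((V t s ω - V' t s ω) ^ 2))) ∂P :=
          lintegral_mono fun ω => lintegral_mono fun s => hpt s ω
      _ = ∫⁻ ω, (ENNReal.ofReal (2 * c_f ^ 2) *
            ((∫⁻ s in Icc t T, ENNReal.ofReal ((UU (s, ω) - UU' (s, ω)) ^ 2)) +
             (∫⁻ s in Icc t T, ENNReal.ofReal ((V t s ω - V' t s ω) ^ 2)))) ∂P := by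
          refine lintegral_congr fun ω => ?_
          rw [lintegral_const_mul' _ _ ENNReal.ofReal_ne_top]
          congr 1
          exact lintegral_add_left (mF.comp measurable_prodMk_right) _
      _ = ENNReal.ofReal (2 * c_f ^ 2) *
          ((∫⁻ ω, (∫⁻ s in Icc t T, ENNReal.ofReal ((UU (s, ω) - UU' (s, ω)) ^ 2)) ∂P) +
           (∫⁻ ω, (∫⁻ s in Icc t T, ENNReal.ofReal ((V t s ω - V' t s ω) ^ 2)) ∂P)) := by
          rw [lintegral_const_mul' _ _ ENNReal.ofReal_ne_top]
          congr 1
          exact lintegral_add_left (Measurable.lintegral_prod_right'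
            (f := fun q : Ω × ℝ => ENNReal.ofReal ((UU (q.2, q.1) - UU' (q.2, q.1)) ^ 2))
            (mF.comp measurable_swap)) _
  -- measurability of the inner V integral as a function of (t, ω)
  set Hf : ℝ × Ω → ℝ≥0∞ := fun q =>
    ∫⁻ s in Icc q.1 T, ENNReal.ofReal ((V q.1 s q.2 - V' q.1 s q.2) ^ 2) with hHf
  have mHf : Measurable Hf := by
    have hset : MeasurableSet {p : (ℝ × Ω) × ℝ | p.1.1 ≤ p.2 ∧ p.2 ≤ T} :=
      (measurableSet_le (measurable_fst.fst) measurable_snd).inter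
        (measurableSet_le measurable_snd measurable_const)
    have hmap : Measurable fun p : (ℝ × Ω) × ℝ => (p.1.1, p.2, p.1.2) :=
      (measurable_fst.fst).prodMk (measurable_snd.prodMk measurable_fst.snd)
    have hin : Measurable fun p : (ℝ × Ω) × ℝ =>
        ENNReal.ofReal ((V p.1.1 p.2 p.1.2 - V' p.1.1 p.2 p.1.2) ^ 2) :=
      (((hV.comp hmap).sub (hV'.comp hmap)).pow_const 2).ennreal_ofReal
    have heq : Hf = fun q : ℝ × Ω => ∫⁻ s,
        ({p : (ℝ × Ω) × ℝ | p.1.1 ≤ p.2 ∧ p.2 ≤ T}.indicator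
          (fun p => ENNReal.ofReal ((V p.1.1 p.2 p.1.2 - V' p.1.1 p.2 p.1.2) ^ 2))) (q, s) := by
      funext q
      rw [hHf]
      simp only
      rw [← lintegral_indicator measurableSet_Icc]
      congr 1
    rw [heq]
    exact (hin.indicator hset).lintegral_prod_right'
  have hswapL : (∫⁻ ω, (∫⁻ t in Icc (T - δ) T,
        ENNReal.ofReal ((Y t ω - Y' t ω) ^ 2)) ∂P)
      = ∫⁻ t in Icc (T - δ) T, (∫⁻ ω, ENNReal.ofReal ((Y t ω - Y' t ω) ^ 2) ∂P) := by
    refine lintegral_lintegral_swap ?_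
    exact ((((hYmeas.comp measurable_swap).sub
      (hY'meas.comp measurable_swap)).pow_const 2).ennreal_ofReal).aemeasurable
  have hswapB : (∫⁻ t in Icc (T - δ) T, (∫⁻ ω, Hf (t, ω) ∂P))
      = ∫⁻ ω, (∫⁻ t in Icc (T - δ) T, Hf (t, ω)) ∂P := by
    refine lintegral_lintegral_swap ?_
    exact mHf.aemeasurable
  calc (∫⁻ ω, (∫⁻ t in Icc (T - δ) T, ENNReal.ofReal ((Y t ω - Y' t ω) ^ 2)) ∂P)
      = ∫⁻ t in Icc (T - δ) T, (∫⁻ ω, ENNReal.ofReal ((Y t ω - Y' t ω) ^ 2) ∂P) := hswapL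
    _ ≤ ∫⁻ t in Icc (T - δ) T, ((ENNReal.ofReal δ * ENNReal.ofReal (2 * c_f ^ 2)) *
          (A + ∫⁻ ω, Hf (t, ω) ∂P)) := by
        refine lintegral_mono_ae ((ae_restrict_mem measurableSet_Icc).mono fun t ht => ?_)
        refine (key2 t ht).trans ?_
        refine mul_le_mul_right (add_le_add ?_ le_rfl) _
        exact lintegral_mono fun ω => lintegral_mono_set (Icc_subset_Icc ht.1 le_rfl)
    _ = (ENNReal.ofReal δ * ENNReal.ofReal (2 * c_f ^ 2)) *
          ((∫⁻ _ in Icc (T - δ) T, (A : ℝ≥0∞)) +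
            ∫⁻ t in Icc (T - δ) T, (∫⁻ ω, Hf (t, ω) ∂P)) := by
        rw [lintegral_const_mul' _ _ (ENNReal.mul_ne_top ENNReal.ofReal_ne_top
          ENNReal.ofReal_ne_top)]
        congr 1
        exact lintegral_add_left measurable_const _
    _ = (ENNReal.ofReal δ * ENNReal.ofReal (2 * c_f ^ 2)) * (ENNReal.ofReal δ * A + B) := by
        have e1 : (∫⁻ _ in Icc (T - δ) T, (A : ℝ≥0∞)) = ENNReal.ofReal δ * A := by
          rw [lintegral_const, Measure.restrict_apply_univ, Real.volume_Icc,
            show T - (T - δ) = δ by ring, mul_comm]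
        have e2 : (∫⁻ t in Icc (T - δ) T, (∫⁻ ω, Hf (t, ω) ∂P)) = B := by
          rw [hswapB, hB]
        rw [e1, e2]
    _ ≤ ENNReal.ofReal (4 * c_f ^ 2 * (δ ^ 2 + δ)) * (A + B) := by
        rw [mul_add, mul_add]
        refine add_le_add ?_ ?_
        · rw [← mul_assoc, ← ENNReal.ofReal_mul hδ.le, ← ENNReal.ofReal_mul (by positivity)]
          exact mul_le_mul' (ENNReal.ofReal_le_ofReal (by nlinarith)) le_rfl
        · rw [← ENNReal.ofReal_mul hδ.le]
          exact mul_le_mul' (ENNReal.ofReal_le_ofReal (by nlinarith)) le_rfl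
    _ = _ := by rw [hAeq]
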